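/- Every strategy-proof and anonymous rule on two alternatives {x,y} with n agents holding strict preferences is a quota majority method: there exists k ∈ {0,1,...,n+1} such that the rule selects x exactly when at least k agents prefer x to y. -/
import Mathlib

lemma exists_perm_of_card_eq {n : ℕ} (v w : Fin n → Bool)
    (h : (Finset.univ.filter fun i => v i = true).card
       = (Finset.univ.filter fun i => w i = true).card) :
    ∃ σ : Equiv.Perm (Fin n), v ∘ σ = w := by
  have h1 : Fintype.card {i : Fin n // w i = true} = Fintype.card {i : Fin n // v i = true} := by
    simp only [Fintype.card_subtype]; omega
  let e := Fintype.equivOfCardEq h1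
  refine ⟨e.extendSubtype, ?_⟩
  funext i
  by_cases hw : w i = true
  · have := e.extendSubtype_mem i hw
    simp only [Function.comp_apply, this, hw]
  · have := e.extendSubtype_not_mem i hw
    simp only [Bool.not_eq_true] at this hw
    simp only [Function.comp_apply, this, hw]

lemma card_filter_lt {n m : ℕ} (hm : m ≤ n) :
    (Finset.univ.filter fun i : Fin n => (i : ℕ) < m).card = m := by
  classical
  have h1 : ((Finset.univ : Finset (Fin n)).filter fun i : Fin n => (i : ℕ) < m).card
      = (((Finset.univ : Finset (Fin n)).map Fin.valEmbedding).filter fun a => a < m).card := by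
    rw [Finset.filter_map, Finset.card_map]
    rfl
  rw [h1, Fin.map_valEmbedding_univ]
  have : (Finset.Iio n).filter (fun a => a < m) = Finset.Iio m := by
    ext a
    simp only [Finset.mem_filter, Finset.mem_Iio]
    omega
  rw [this, Nat.card_Iio]

/-- Every strategy-proof and anonymous rule on two alternatives is a quota
majority method: there is `k ∈ {0,…,n+1}` such that `x` (encoded `true`) is
chosen exactly when at least `k` agents prefer `x` to `y`. -/
theorem stmt7 (n : ℕ) (f : (Fin n → Bool) → Bool)
    (hsp : ∀ (v : Fin n → Bool) (i : Fin n),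
      f (Function.update v i (!(v i))) = v i → f v = v i)
    (hanon : ∀ (v : Fin n → Bool) (σ : Equiv.Perm (Fin n)), f (v ∘ σ) = f v) :
    ∃ k ≤ n + 1, ∀ v : Fin n → Bool,
      f v = true ↔ k ≤ (Finset.univ.filter fun i => v i = true).card := by
  classical
  set cnt : (Fin n → Bool) → ℕ :=
    fun v => (Finset.univ.filter fun i => v i = true).card with hcnt
  -- f depends only on the count
  have hcountf : ∀ v w : Fin n → Bool, cnt v = cnt w → f v = f w := by
    intro v w h
    obtain ⟨σ, hσ⟩ := exists_perm_of_card_eq v w h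
    rw [← hσ, hanon]
  have hcnt_le : ∀ v : Fin n → Bool, cnt v ≤ n := by
    intro v
    simpa using Finset.card_le_card (Finset.filter_subset _ (Finset.univ : Finset (Fin n)))
  -- canonical profiles
  set V : ℕ → (Fin n → Bool) := fun m i => decide ((i : ℕ) < m) with hV
  have hVcnt : ∀ m, m ≤ n → cnt (V m) = m := by
    intro m hm
    have h1 : (Finset.univ.filter fun i : Fin n => (V m i) = true)
        = Finset.univ.filter fun i : Fin n => (i : ℕ) < m := by
      apply Finset.filter_congr
      intro i _
      simp [hV]
    rw [hcnt]
    simp only [h1]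
    exact card_filter_lt hm
  -- f v = f (V (cnt v))
  have hfV : ∀ v : Fin n → Bool, f v = f (V (cnt v)) := by
    intro v
    exact hcountf v _ (by rw [hVcnt _ (hcnt_le v)])
  -- monotone step
  have hstep : ∀ m, m < n → f (V m) = true → f (V (m + 1)) = true := by
    intro m hm hfm
    set i : Fin n := ⟨m, hm⟩ with hi
    have hVi : V m i = false := by simp [hV, hi]
    -- contrapositive of strategy-proofness
    have hne : f (V m) ≠ V m i := by rw [hVi, hfm]; simp
    have hup : f (Function.update (V m) i (!(V m i))) ≠ V m i :=
      fun h => hne (hsp (V m) i h)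
    have hup' : f (Function.update (V m) i (!(V m i))) = true := by
      rw [hVi] at hup ⊢
      simpa using hup
    -- the updated profile has count m+1
    have hc : cnt (Function.update (V m) i (!(V m i))) = cnt (V (m + 1)) := by
      have hupd : Function.update (V m) i (!(V m i)) = V (m + 1) := by
        funext j
        rcases eq_or_ne j i with rfl | hji
        · simp [hVi, hV, hi]
        · rw [Function.update_of_ne hji]
          have : (j : ℕ) ≠ m := fun h => hji (by ext; simp [h, hi])
          simp only [hV]
          congr 1
          · simp only [eq_iff_iff]
            omega
      rw [hupd]
    rw [← hcountf _ _ hc, hup']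
  -- full monotonicity
  have hmono : ∀ a b, a ≤ b → b ≤ n → f (V a) = true → f (V b) = true := by
    intro a b hab hbn ha
    induction b, hab using Nat.le_induction with
    | base => exact ha
    | succ b hab ih => exact hstep b (by omega) (ih (by omega))
  by_cases hex : ∃ m, f (V m) = true ∧ m ≤ n
  · set k := Nat.find hex with hk
    obtain ⟨hkt, hkn⟩ := Nat.find_spec hex
    refine ⟨k, by omega, fun v => ?_⟩
    show f v = true ↔ k ≤ cnt v
    rw [hfV v]
    constructor
    · intro h
      exact Nat.find_min' hex ⟨h, hcnt_le v⟩
    · intro h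
      exact hmono k (cnt v) h (hcnt_le v) hkt
  · push_neg at hex
    refine ⟨n + 1, le_refl _, fun v => ?_⟩
    have h1 : f v = false := by
      rw [hfV v]
      have := hex (cnt v)
      rcases Bool.eq_false_or_eq_true (f (V (cnt v))) with h | h
      · exact absurd (this h) (by simpa using hcnt_le v)
      · exact h
    show f v = true ↔ n + 1 ≤ cnt v
    rw [h1]
    simp only [Bool.false_eq_true, false_iff]
    have := hcnt_le v
    omega
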